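/- Let R be a commutative ring, f ≥ 3, and x_1,…,x_f, x'_1,…,x'_f ∈ R. In the polynomial ring R[Z^{(j)}_{r;i_1,…,i_r}] with variables indexed by 2 ≤ r ≤ f, 1 ≤ j ≤ r−1 and 1 ≤ i_1 < ⋯ < i_r ≤ f, define: for r = 2 the constants s^{(1)}_{2;i_1,i_2} = x_{i_1} x'_{i_2} − x'_{i_1} x_{i_2}, and for r ≥ 3 the polynomials s^{(j)}_{r;i_1,…,i_r} = Σ_{u=1}^{r} (−1)^{u−1} ( x_{i_u} Z^{(j)}_{r−1;i_1,…,î_u,…,i_r} + x'_{i_u} Z^{(j−1)}_{r−1;i_1,…,î_u,…,i_r} ), where î_u means the index i_u is omitted and Z^{(j)}_{r−1;…} is replaced by 0 whenever j ≤ 0 or j ≥ r−1+1. Then for every 3 ≤ r ≤ f, every 1 ≤ j ≤ r−1 and every 1 ≤ i_1 < ⋯ < i_r ≤ f, substituting each variable Z^{(j')}_{r−1;i'_1,…,i'_{r−1}} by the value s^{(j')}_{r−1;i'_1,…,i'_{r−1}} in s^{(j)}_{r;i_1,…,i_r} yields 0 in R[Z]. -/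

import Mathlib

noncomputable section

namespace Stmt8

open MvPolynomial

/-- Index type for the variables `Z^{(j)}_{r; i_1,…,i_r}`: a level `r`, a
superscript `j`, and an `r`-tuple of indices. -/
abbrev ENidx : Type := Σ r : ℕ, ℕ × (Fin r → ℕ)

/-- The variable `Z^{(j)}_{m; i}`, replaced by `0` when the superscript `j` is
out of the valid range `1 ≤ j ≤ m − 1`. -/
def Zt (R : Type) [CommRing R] (m j : ℕ) (i : Fin m → ℕ) : MvPolynomial ENidx R :=
  if 1 ≤ j ∧ j + 1 ≤ m then MvPolynomial.X (⟨m, (j, i)⟩ : ENidx) else 0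

/-- The entries `s^{(j)}_{r; i_1,…,i_r}` of the differentials of the
Eagon–Northcott complex of the `2×f` matrix with rows `x`, `x'`:
for `r = 2`, `s^{(1)}_{2; i_1, i_2} = x_{i_1} x'_{i_2} − x'_{i_1} x_{i_2}`, and
for `r ≥ 3`,
`s^{(j)}_{r; i} = Σ_u (−1)^{u−1} (x_{i_u} Z^{(j)}_{r−1; i∖i_u} + x'_{i_u} Z^{(j−1)}_{r−1; i∖i_u})`. -/
def sEN (R : Type) [CommRing R] (x x' : ℕ → R) :
    (r : ℕ) → ℕ → (Fin r → ℕ) → MvPolynomial ENidx R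
  | 0, _, _ => 0
  | 1, _, _ => 0
  | 2, j, i =>
      if j = 1 then MvPolynomial.C (x (i 0) * x' (i 1) - x' (i 0) * x (i 1)) else 0
  | (m + 3), j, i =>
      ∑ u : Fin (m + 3), (-1 : MvPolynomial ENidx R) ^ (u : ℕ) *
        (MvPolynomial.C (x (i u)) * Zt R (m + 2) j (i ∘ u.succAbove)
          + MvPolynomial.C (x' (i u)) * Zt R (m + 2) (j - 1) (i ∘ u.succAbove))

/-- value of `succAbove` as a natural number. -/
lemma val_sAb {n : ℕ} (p : Fin (n + 1)) (t : Fin n) :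
    ((p.succAbove t : Fin (n + 1)) : ℕ) = if (t : ℕ) < (p : ℕ) then (t : ℕ) else (t : ℕ) + 1 := by
  rcases lt_or_ge (t.castSucc) p with h | h
  · rw [Fin.succAbove_of_castSucc_lt _ _ h]
    have h' : (t : ℕ) < (p : ℕ) := by simpa [Fin.lt_def] using h
    simp [h']
  · rw [Fin.succAbove_of_le_castSucc _ _ h]
    have h' : (p : ℕ) ≤ (t : ℕ) := by simpa [Fin.le_def] using h
    rw [if_neg (by omega)]
    simp

/-- The involution pairing up indices in the double sum. -/
def invol (n : ℕ) (p : Fin (n + 2) × Fin (n + 1)) : Fin (n + 2) × Fin (n + 1) :=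
  if h : ((p.2 : ℕ) < (p.1 : ℕ)) then
    (p.2.castSucc, ⟨(p.1 : ℕ) - 1, by have := p.1.isLt; omega⟩)
  else
    (⟨(p.2 : ℕ) + 1, by have := p.2.isLt; omega⟩, ⟨(p.1 : ℕ), by have := p.2.isLt; omega⟩)

lemma invol_pos (n : ℕ) (p : Fin (n + 2) × Fin (n + 1)) (h : ((p.2 : ℕ) < (p.1 : ℕ))) :
    invol n p = (p.2.castSucc, ⟨(p.1 : ℕ) - 1, by have := p.1.isLt; omega⟩) := dif_pos h

lemma invol_neg (n : ℕ) (p : Fin (n + 2) × Fin (n + 1)) (h : ¬ ((p.2 : ℕ) < (p.1 : ℕ))) :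
    invol n p = (⟨(p.2 : ℕ) + 1, by have := p.2.isLt; omega⟩,
      ⟨(p.1 : ℕ), by have := p.2.isLt; omega⟩) := dif_neg h

lemma invol_invol (n : ℕ) (p : Fin (n + 2) × Fin (n + 1)) : invol n (invol n p) = p := by
  by_cases h : ((p.2 : ℕ) < (p.1 : ℕ))
  · rw [invol_pos n p h, invol_neg _ _ (by simp [Fin.val_mk]; omega)]
    ext <;> simp [Fin.val_mk] <;> omega
  · rw [invol_neg n p h, invol_pos _ _ (by simp [Fin.val_mk]; omega)]
    ext <;> simp [Fin.val_mk] <;> omega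

lemma invol_ne (n : ℕ) (p : Fin (n + 2) × Fin (n + 1)) : invol n p ≠ p := by
  by_cases h : ((p.2 : ℕ) < (p.1 : ℕ))
  · rw [invol_pos n p h]
    intro hc
    have := congrArg (fun q => ((q.1 : ℕ))) hc
    simp at this; omega
  · rw [invol_neg n p h]
    intro hc
    have h1 := congrArg (fun q => ((q.1 : ℕ))) hc
    simp at h1; omega

lemma cancel_pair {M : Type} [AddCommGroup M] (k l : ℕ) (hkl : k + 1 = l ∨ l + 1 = k)
    (a b : M) (hab : a = b) : (-1 : ℤ) ^ k • a + (-1 : ℤ) ^ l • b = 0 := by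
  subst hab
  rcases hkl with h | h <;> rw [← h, pow_succ, ← add_smul] <;> ring_nf <;> simp

/-- Key cancellation lemma: an alternating double sum of a symmetric function vanishes. -/
lemma key {M : Type} [AddCommGroup M] {n : ℕ} (G : Fin (n + 2) → Fin (n + 2) → M)
    (hsymm : ∀ u w, G u w = G w u) :
    ∑ u : Fin (n + 2), ∑ v : Fin (n + 1),
      ((-1 : ℤ) ^ ((u : ℕ) + (v : ℕ))) • G u (u.succAbove v) = 0 := by
  rw [← Finset.sum_product']
  refine Finset.sum_ninvolution (invol n) ?_ (fun p _ => invol_ne n p) (by simp)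
    (invol_invol n)
  rintro ⟨u, v⟩
  by_cases h : ((v : ℕ) < (u : ℕ))
  · rw [invol_pos n (u, v) h]
    have e1 : u.succAbove v = v.castSucc :=
      Fin.succAbove_of_castSucc_lt _ _ (by simpa [Fin.lt_def] using h)
    have e2 : (v.castSucc).succAbove (⟨(u : ℕ) - 1, by have := u.isLt; omega⟩ : Fin (n + 1)) = u := by
      apply Fin.ext
      rw [val_sAb]
      simp only [Fin.val_mk, Fin.coe_castSucc]
      rw [if_neg (by omega)]
      omega
    dsimp only
    rw [e1, e2]
    apply cancel_pair
    · simp only [Fin.val_mk, Fin.coe_castSucc]; omega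
    · exact hsymm u v.castSucc
  · rw [invol_neg n (u, v) h]
    have e1 : u.succAbove v = (⟨(v : ℕ) + 1, by have := v.isLt; omega⟩ : Fin (n + 2)) := by
      apply Fin.ext
      rw [val_sAb, if_neg (by omega)]
    have e2 : (⟨(v : ℕ) + 1, by have := v.isLt; omega⟩ : Fin (n + 2)).succAbove
        (⟨(u : ℕ), by have := v.isLt; omega⟩ : Fin (n + 1)) = u := by
      apply Fin.ext
      rw [val_sAb]
      simp only [Fin.val_mk]
      rw [if_pos (by omega)]
    dsimp only
    rw [e1, e2]
    apply cancel_pair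
    · omega
    · exact hsymm u _

lemma sEN_out (R : Type) [CommRing R] (x x' : ℕ → R) (m j : ℕ) (i : Fin m → ℕ)
    (h : ¬ (1 ≤ j ∧ j + 1 ≤ m)) : sEN R x x' m j i = 0 := by
  match m with
  | 0 => rfl
  | 1 => rfl
  | 2 => rw [sEN, if_neg (by omega)]
  | m + 3 =>
    rw [sEN]
    apply Finset.sum_eq_zero
    intro u _
    rw [Zt, if_neg (by omega), Zt, if_neg (by omega)]
    ring

lemma bind_Zt (R : Type) [CommRing R] (x x' : ℕ → R) (m j : ℕ) (i : Fin m → ℕ) :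
    MvPolynomial.bind₁ (fun v : ENidx => sEN R x x' v.1 v.2.1 v.2.2) (Zt R m j i)
      = sEN R x x' m j i := by
  rw [Zt]
  split_ifs with h
  · rw [bind₁_X_right]
  · rw [map_zero, sEN_out R x x' m j i h]

/-- doubly punctured tuple -/
def dpt {n : ℕ} (i : Fin (n + 2) → ℕ) (u w : Fin (n + 2)) (t : Fin n) : ℕ :=
  i ⟨if (t : ℕ) < min (u : ℕ) (w : ℕ) then (t : ℕ)
     else if (t : ℕ) + 1 < max (u : ℕ) (w : ℕ) then (t : ℕ) + 1 else (t : ℕ) + 2,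
     by have := t.isLt; split_ifs <;> omega⟩

lemma dpt_comm {n : ℕ} (i : Fin (n + 2) → ℕ) (u w : Fin (n + 2)) :
    dpt i u w = dpt i w u := by
  funext t
  rw [dpt, dpt]
  congr 2
  rw [Nat.min_comm, Nat.max_comm]

lemma comp_eq {n : ℕ} (i : Fin (n + 4) → ℕ) (u : Fin (n + 4)) (v : Fin (n + 3)) :
    (i ∘ u.succAbove) ∘ v.succAbove = dpt (n := n + 2) i u (u.succAbove v) := by
  funext t
  simp only [Function.comp_apply, dpt]
  congr 1
  apply Fin.ext
  have h1 := val_sAb u (v.succAbove t)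
  have h2 := val_sAb v t
  have h3 := val_sAb u v
  rw [h1, h2]
  simp only [Fin.val_mk, h3]
  have := t.isLt
  have := v.isLt
  have := u.isLt
  split_ifs <;> omega

def Gfun (R : Type) [CommRing R] (x x' : ℕ → R) (n j : ℕ) (i : Fin (n + 4) → ℕ)
    (u w : Fin (n + 4)) : MvPolynomial ENidx R :=
  (C (x (i u)) * C (x (i w))) * Zt R (n + 2) j (dpt i u w)
  + (C (x (i u)) * C (x' (i w)) + C (x' (i u)) * C (x (i w))) * Zt R (n + 2) (j - 1) (dpt i u w)
  + (C (x' (i u)) * C (x' (i w))) * Zt R (n + 2) (j - 2) (dpt i u w)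

lemma Gfun_symm (R : Type) [CommRing R] (x x' : ℕ → R) (n j : ℕ) (i : Fin (n + 4) → ℕ)
    (u w : Fin (n + 4)) : Gfun R x x' n j i u w = Gfun R x x' n j i w u := by
  rw [Gfun, Gfun, dpt_comm]
  ring


lemma sEN3 (R : Type) [CommRing R] (x x' : ℕ → R) (j : ℕ) (i : Fin 3 → ℕ) :
    sEN R x x' 3 j i = ∑ u : Fin 3, (-1 : MvPolynomial ENidx R) ^ (u : ℕ) *
        (MvPolynomial.C (x (i u)) * Zt R 2 j (i ∘ u.succAbove)
          + MvPolynomial.C (x' (i u)) * Zt R 2 (j - 1) (i ∘ u.succAbove)) := rfl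

lemma sEN4 (R : Type) [CommRing R] (x x' : ℕ → R) (m j : ℕ) (i : Fin (m + 4) → ℕ) :
    sEN R x x' (m + 4) j i = ∑ u : Fin (m + 4), (-1 : MvPolynomial ENidx R) ^ (u : ℕ) *
        (MvPolynomial.C (x (i u)) * Zt R (m + 3) j (i ∘ u.succAbove)
          + MvPolynomial.C (x' (i u)) * Zt R (m + 3) (j - 1) (i ∘ u.succAbove)) := rfl

lemma aux3 (R : Type) [CommRing R] (x x' : ℕ → R) (j : ℕ) (hj1 : 1 ≤ j) (hj2 : j ≤ 2)
    (i : Fin 3 → ℕ) :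
    MvPolynomial.bind₁ (fun v : ENidx => sEN R x x' v.1 v.2.1 v.2.2)
      (sEN R x x' 3 j i) = 0 := by
  rw [sEN3, map_sum]
  simp only [map_mul, map_add, map_pow, map_neg, map_one, bind₁_C_right, bind_Zt]
  have hj : j = 1 ∨ j = 2 := by omega
  rcases hj with rfl | rfl <;>
  · simp only [Fin.sum_univ_three]
    norm_num [sEN, Fin.succAbove, Fin.lt_def, Function.comp,
      map_sub, map_mul]
    ring

lemma aux4 (R : Type) [CommRing R] (x x' : ℕ → R) (m j : ℕ) (i : Fin (m + 4) → ℕ) :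
    MvPolynomial.bind₁ (fun v : ENidx => sEN R x x' v.1 v.2.1 v.2.2)
      (sEN R x x' (m + 4) j i) = 0 := by
  rw [sEN4, map_sum]
  simp only [map_mul, map_add, map_pow, map_neg, map_one, bind₁_C_right, bind_Zt]
  have hmain := key (n := m + 2) (Gfun R x x' m j i) (Gfun_symm R x x' m j i)
  rw [← hmain]
  apply Finset.sum_congr rfl
  intro u _
  rw [sEN, sEN]
  rw [Finset.mul_sum, Finset.mul_sum, ← Finset.sum_add_distrib, Finset.mul_sum]
  apply Finset.sum_congr rfl
  intro v _
  rw [comp_eq i u v]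
  rw [Gfun]
  have h12 : j - 1 - 1 = j - 2 := by omega
  rw [h12]
  rw [zsmul_eq_mul]
  push_cast
  rw [pow_add]
  simp only [Function.comp_apply]
  ring

/-- Substituting each variable `Z^{(j')}_{r−1; i'}` by the value
`s^{(j')}_{r−1; i'}` in `s^{(j)}_{r; i_1,…,i_r}` yields `0`: consecutive
differentials of the Eagon–Northcott complex compose to zero. -/
theorem syzygy_distinguisher_stmt8
    (R : Type) [CommRing R] (f : ℕ) (hf : 3 ≤ f) (x x' : ℕ → R)
    (r : ℕ) (hr : 3 ≤ r) (hrf : r ≤ f)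
    (j : ℕ) (hj1 : 1 ≤ j) (hj2 : j ≤ r - 1)
    (i : Fin r → ℕ) (hmono : StrictMono i) (hrange : ∀ u, 1 ≤ i u ∧ i u ≤ f) :
    MvPolynomial.bind₁ (fun v : ENidx => sEN R x x' v.1 v.2.1 v.2.2)
      (sEN R x x' r j i) = 0 := by
  rcases Nat.lt_or_ge r 4 with h4 | h4
  · obtain rfl : r = 3 := by omega
    exact aux3 R x x' j hj1 (by omega) i
  · obtain ⟨m, rfl⟩ : ∃ m, r = m + 4 := ⟨r - 4, by omega⟩
    exact aux4 R x x' m j i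

end Stmt8
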